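/- The points z = 1 ± √2 and z = −1 ± √2 (roots of (z²−2z−1)(z²+2z−1)) are fixed points of f(z) = (z⁷ + 7z³)/(7z⁴ + 1), but f′ does not vanish at any of them. -/

import Mathlib

lemma steane_key (w : ℝ) (hw : w ^ 2 = 6 * w - 1) (z : ℂ) (hz : z ^ 2 = (w : ℂ)) :
    (z ^ 7 + 7 * z ^ 3) / (7 * z ^ 4 + 1) = z ∧
    deriv (fun z : ℂ => (z ^ 7 + 7 * z ^ 3) / (7 * z ^ 4 + 1)) z ≠ 0 := by
  have hw0 : w ≠ 0 := by intro h; rw [h] at hw; norm_num at hw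
  have hw1 : w ^ 2 - 1 ≠ 0 := by
    intro h; nlinarith [hw, h]
  have hDr : 7 * z ^ 4 + 1 = ((7 * w ^ 2 + 1 : ℝ) : ℂ) := by
    push_cast
    linear_combination (7 * (z ^ 2 + (w : ℂ))) * hz
  have hD0 : 7 * z ^ 4 + 1 ≠ 0 := by
    rw [hDr]
    exact_mod_cast Complex.ofReal_ne_zero.mpr (by positivity)
  have hwc : ((w : ℂ)) ^ 2 = 6 * (w : ℂ) - 1 := by exact_mod_cast congrArg Complex.ofReal hw
  constructor
  · rw [div_eq_iff hD0]
    linear_combination (z ^ 5 + z ^ 3 * (w : ℂ) + z * (w : ℂ) ^ 2 - 7 * z ^ 3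
      - 7 * z * (w : ℂ) + 7 * z) * hz + (z * ((w : ℂ) - 1)) * hwc
  · have hnum : HasDerivAt (fun z : ℂ => z ^ 7 + 7 * z ^ 3) (7 * z ^ 6 + 21 * z ^ 2) z := by
      have h : HasDerivAt (fun z : ℂ => z ^ 7 + 7 * z ^ 3) _ z := (hasDerivAt_pow 7 z).add ((hasDerivAt_pow 3 z).const_mul (7 : ℂ))
      convert h using 1
      push_cast; ring
    have hden : HasDerivAt (fun z : ℂ => 7 * z ^ 4 + 1) (28 * z ^ 3) z := by
      have h : HasDerivAt (fun z : ℂ => 7 * z ^ 4 + 1) _ z := ((hasDerivAt_pow 4 z).const_mul (7 : ℂ)).add_const (1 : ℂ)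
      convert h using 1
      push_cast; ring
    have hd := (hnum.div hden hD0).deriv
    rw [show (fun z : ℂ => (z ^ 7 + 7 * z ^ 3) / (7 * z ^ 4 + 1)) = (fun z : ℂ => z ^ 7 + 7 * z ^ 3) / (fun z : ℂ => 7 * z ^ 4 + 1) from rfl, hd]
    apply div_ne_zero
    · have hN : (7 * z ^ 6 + 21 * z ^ 2) * (7 * z ^ 4 + 1) - (z ^ 7 + 7 * z ^ 3) * (28 * z ^ 3)
          = 21 * (w : ℂ) * ((w : ℂ) ^ 2 - 1) ^ 2 := by
        linear_combination (21 * z ^ 8 + 21 * z ^ 6 * (w : ℂ) + 21 * z ^ 4 * (w : ℂ) ^ 2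
          + 21 * z ^ 2 * (w : ℂ) ^ 3 + 21 * (w : ℂ) ^ 4 - 42 * z ^ 4 - 42 * z ^ 2 * (w : ℂ)
          - 42 * (w : ℂ) ^ 2 + 21) * hz
      rw [hN]
      apply mul_ne_zero (mul_ne_zero (by norm_num) (by exact_mod_cast hw0))
      apply pow_ne_zero
      intro h
      apply hw1
      exact_mod_cast (by push_cast at h ⊢; linear_combination h : ((w ^ 2 - 1 : ℝ) : ℂ) = 0)
    · exact pow_ne_zero 2 hD0

/-- The points `z = 1 ± √2` and `z = −1 ± √2` (the roots of
`(z²−2z−1)(z²+2z−1)`) are fixed points of the Steane decoder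
`f(z) = (z⁷ + 7z³)/(7z⁴ + 1)`, but `f′` does not vanish at any of them. -/
theorem stmt_16 : ∀ z : ℂ,
    (z = 1 + (Real.sqrt 2 : ℂ) ∨ z = 1 - (Real.sqrt 2 : ℂ) ∨
     z = -1 + (Real.sqrt 2 : ℂ) ∨ z = -1 - (Real.sqrt 2 : ℂ)) →
    (z ^ 7 + 7 * z ^ 3) / (7 * z ^ 4 + 1) = z ∧
    deriv (fun z : ℂ => (z ^ 7 + 7 * z ^ 3) / (7 * z ^ 4 + 1)) z ≠ 0 := by
  intro z hcase
  have ha : Real.sqrt 2 ^ 2 = 2 := Real.sq_sqrt (by norm_num)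
  have hac : (Real.sqrt 2 : ℂ) ^ 2 = 2 := by exact_mod_cast congrArg Complex.ofReal ha
  rcases hcase with h | h | h | h
  · exact steane_key (3 + 2 * Real.sqrt 2) (by nlinarith [ha]) z
      (by rw [h]; push_cast; linear_combination hac)
  · exact steane_key (3 - 2 * Real.sqrt 2) (by nlinarith [ha]) z
      (by rw [h]; push_cast; linear_combination hac)
  · exact steane_key (3 - 2 * Real.sqrt 2) (by nlinarith [ha]) z
      (by rw [h]; push_cast; linear_combination hac)
  · exact steane_key (3 + 2 * Real.sqrt 2) (by nlinarith [ha]) z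
      (by rw [h]; push_cast; linear_combination hac)
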